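/- Among all augmentation functions m, the conditional variance Var(τ_m | X = x) of the pseudo-outcome τ_m = A(Y - m(X))/π_A(X) is minimized pointwise by the counterfactual mean outcome m*(x) = π_{-1}(x)μ_1(x) + π_1(x)μ_{-1}(x), where μ_a(x) = E[Y | X = x, A = a]. -/

import Mathlib

open MeasureTheory

/-- The counterfactual mean outcome minimizes the conditional variance of the
pseudo-outcome.  We work on a probability space representing the conditional law given `X = x`:
`A ∈ {-1,1}` with `μ {A = 1} = π1 ∈ (0,1)`, `Y` square-integrable with arm-wise conditional
means `μ1, μm1`.  For `m ∈ ℝ` let `τ_m = A (Y - m) / π_A`.  Then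
`Var(τ_{m*}) ≤ Var(τ_m)` for every `m`, where `m* = (1 - π1) μ1 + π1 μm1`. -/
theorem cmo_minimizes_conditional_variance
    {Ω : Type*} [MeasurableSpace Ω] (μ : Measure Ω) [IsProbabilityMeasure μ]
    (A : Ω → ℝ) (hA : Measurable A) (hAval : ∀ ω, A ω = 1 ∨ A ω = -1)
    (Y : Ω → ℝ) (hY : MemLp Y 2 μ)
    (π1 : ℝ) (hπ1 : (μ {ω | A ω = 1}).toReal = π1) (hπ1pos : 0 < π1) (hπ1lt : π1 < 1)
    (μ1 μm1 : ℝ)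
    (hμ1 : ∫ ω in {ω | A ω = 1}, Y ω ∂μ = π1 * μ1)
    (hμm1 : ∫ ω in {ω | A ω = -1}, Y ω ∂μ = (1 - π1) * μm1)
    (τ : ℝ → Ω → ℝ)
    (hτ : ∀ (m : ℝ) (ω : Ω),
      τ m ω = A ω * (Y ω - m) / (if A ω = 1 then π1 else 1 - π1))
    (Var : ℝ → ℝ)
    (hVar : ∀ m : ℝ, Var m = ∫ ω, (τ m ω)^2 ∂μ - (∫ ω, τ m ω ∂μ)^2)
    (mstar : ℝ) (hmstar : mstar = (1 - π1) * μ1 + π1 * μm1) :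
    ∀ m : ℝ, Var mstar ≤ Var m := by
  intro m
  have hQ : 0 < 1 - π1 := by linarith
  set S : Set Ω := {ω | A ω = 1} with hSdef
  have hS : MeasurableSet S := hA (measurableSet_singleton 1)
  have hScEq : Sᶜ = {ω | A ω = -1} := by
    ext ω
    simp only [Set.mem_compl_iff, Set.mem_setOf_eq, hSdef]
    constructor
    · intro h
      rcases hAval ω with h1 | h1
      · exact absurd h1 h
      · exact h1
    · intro h h1
      rw [h1] at h; norm_num at h
  have hμS : (μ S).toReal = π1 := hπ1
  have hμSc : (μ Sᶜ).toReal = 1 - π1 := by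
    have h1 : μ Sᶜ = 1 - μ S := by
      rw [measure_compl hS (measure_ne_top μ S), measure_univ]
    rw [h1, ENNReal.toReal_sub_of_le prob_le_one ENNReal.one_ne_top,
      ENNReal.toReal_one, hμS]
  -- the multiplier function
  set g : Ω → ℝ := fun ω => if A ω = 1 then 1 / π1 else -(1 / (1 - π1)) with hgdef
  have hgval1 : ∀ ω, A ω = 1 → g ω = 1 / π1 := by
    intro ω h
    show (if A ω = 1 then 1 / π1 else -(1 / (1 - π1))) = 1 / π1
    rw [if_pos h]
  have hgval2 : ∀ ω, A ω = -1 → g ω = -(1 / (1 - π1)) := by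
    intro ω h
    show (if A ω = 1 then 1 / π1 else -(1 / (1 - π1))) = -(1 / (1 - π1))
    rw [if_neg (by rw [h]; norm_num)]
  have hgmeas : Measurable g := Measurable.ite (hA (measurableSet_singleton 1))
    measurable_const measurable_const
  set C : ℝ := max (1 / π1) (1 / (1 - π1)) with hCdef
  have hgbound : ∀ ω, ‖g ω‖ ≤ C := by
    intro ω
    have hle1 : 1 / π1 ≤ C := le_max_left _ _
    have hle2 : 1 / (1 - π1) ≤ C := le_max_right _ _
    rcases hAval ω with h | h
    · rw [hgval1 ω h, Real.norm_eq_abs, abs_of_pos (by positivity)]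
      exact hle1
    · rw [hgval2 ω h, Real.norm_eq_abs, abs_neg, abs_of_pos (by positivity)]
      exact hle2
  -- τ m' = g * (Y - m')
  have hτg : ∀ (m' : ℝ) (ω : Ω), τ m' ω = g ω * (Y ω - m') := by
    intro m' ω
    rcases hAval ω with h | h
    · rw [hτ, h, hgval1 ω h, if_pos rfl]
      field_simp
    · rw [hτ, h, hgval2 ω h, if_neg (by norm_num)]
      field_simp
  -- decomposition τ m' = τ mstar + (mstar - m') * g
  have hdec : ∀ (m' : ℝ) (ω : Ω), τ m' ω = τ mstar ω + (mstar - m') * g ω := by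
    intro m' ω
    rw [hτg, hτg]
    ring
  -- integrability
  have hYint : Integrable Y μ := hY.integrable one_le_two
  have hgint : Integrable g μ := by
    refine (integrable_const C).mono' hgmeas.aestronglyMeasurable ?_
    filter_upwards with ω using hgbound ω
  have hgsqint : Integrable (fun ω => (g ω) ^ 2) μ := by
    refine (integrable_const (C ^ 2)).mono' ((hgmeas.pow_const 2).aestronglyMeasurable) ?_
    filter_upwards with ω
    have := hgbound ω
    have h0 : (0:ℝ) ≤ ‖g ω‖ := norm_nonneg _
    calc ‖(g ω) ^ 2‖ = ‖g ω‖ ^ 2 := by rw [norm_pow]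
      _ ≤ C ^ 2 := by nlinarith
  have hτmem : ∀ m' : ℝ, MemLp (τ m') 2 μ := by
    intro m'
    have hbase : MemLp (fun ω => Y ω - m') 2 μ := hY.sub (memLp_const m')
    refine MemLp.of_le_mul (c := C) hbase ?_ ?_
    · have : τ m' = fun ω => g ω * (Y ω - m') := funext (hτg m')
      rw [this]
      exact (hgmeas.aestronglyMeasurable.mul
        (hY.aestronglyMeasurable.sub aestronglyMeasurable_const))
    · filter_upwards with ω
      rw [hτg m' ω, norm_mul]
      exact mul_le_mul_of_nonneg_right (hgbound ω) (norm_nonneg _)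
  have hτint : ∀ m' : ℝ, Integrable (τ m') μ := fun m' => (hτmem m').integrable one_le_two
  have hτsqint : ∀ m' : ℝ, Integrable (fun ω => (τ m' ω) ^ 2) μ := by
    intro m'
    have := (hτmem m').integrable_sq
    simpa [pow_two] using this
  have hτgint : Integrable (fun ω => τ mstar ω * g ω) μ := by
    have := (hτint mstar).bdd_mul hgmeas.aestronglyMeasurable (Filter.Eventually.of_forall hgbound)
    simpa [mul_comm] using this
  -- ∫ g = 0
  have hgS : ∫ ω in S, g ω ∂μ = 1 := by
    have h1 : ∫ ω in S, g ω ∂μ = ∫ _ in S, (1 / π1) ∂μ :=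
      setIntegral_congr_fun hS (fun ω hω => hgval1 ω hω)
    rw [h1, setIntegral_const, smul_eq_mul, measureReal_def, hμS]
    field_simp
  have hgSc : ∫ ω in Sᶜ, g ω ∂μ = -1 := by
    have h1 : ∫ ω in Sᶜ, g ω ∂μ = ∫ _ in Sᶜ, (-(1 / (1 - π1))) ∂μ := by
      refine setIntegral_congr_fun hS.compl (fun ω hω => ?_)
      rw [hScEq] at hω
      exact hgval2 ω hω
    rw [h1, setIntegral_const, smul_eq_mul, measureReal_def, hμSc]
    field_simp
  have hg0 : ∫ ω, g ω ∂μ = 0 := by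
    rw [← integral_add_compl hS hgint, hgS, hgSc]; ring
  -- ∫ g² = 1/π1 + 1/(1-π1)
  have hgsq : ∫ ω, (g ω) ^ 2 ∂μ = 1 / π1 + 1 / (1 - π1) := by
    rw [← integral_add_compl hS hgsqint]
    have h1 : ∫ ω in S, (g ω) ^ 2 ∂μ = ∫ _ in S, ((1 / π1) ^ 2) ∂μ := by
      refine setIntegral_congr_fun hS (fun ω hω => ?_)
      show (g ω) ^ 2 = (1 / π1) ^ 2
      rw [hgval1 ω hω]
    have h2 : ∫ ω in Sᶜ, (g ω) ^ 2 ∂μ = ∫ _ in Sᶜ, ((1 / (1 - π1)) ^ 2) ∂μ := by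
      refine setIntegral_congr_fun hS.compl (fun ω hω => ?_)
      rw [hScEq] at hω
      show (g ω) ^ 2 = (1 / (1 - π1)) ^ 2
      rw [hgval2 ω hω]
      ring
    rw [h1, h2, setIntegral_const, setIntegral_const, smul_eq_mul, smul_eq_mul, measureReal_def, measureReal_def, hμS, hμSc]
    field_simp
  -- ∫ τ mstar * g = 0
  have hcross : ∫ ω, τ mstar ω * g ω ∂μ = 0 := by
    rw [← integral_add_compl hS hτgint]
    have h1 : ∫ ω in S, τ mstar ω * g ω ∂μ
        = ∫ ω in S, (Y ω - mstar) * (1 / π1) ^ 2 ∂μ := by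
      refine setIntegral_congr_fun hS (fun ω hω => ?_)
      show τ mstar ω * g ω = (Y ω - mstar) * (1 / π1) ^ 2
      rw [hτg mstar ω, hgval1 ω hω]
      ring
    have h2 : ∫ ω in Sᶜ, τ mstar ω * g ω ∂μ
        = ∫ ω in Sᶜ, (Y ω - mstar) * (1 / (1 - π1)) ^ 2 ∂μ := by
      refine setIntegral_congr_fun hS.compl (fun ω hω => ?_)
      rw [hScEq] at hω
      show τ mstar ω * g ω = (Y ω - mstar) * (1 / (1 - π1)) ^ 2
      rw [hτg mstar ω, hgval2 ω hω]
      ring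
    have hYS : ∫ ω in S, (Y ω - mstar) ∂μ = π1 * μ1 - π1 * mstar := by
      rw [integral_sub (hYint.restrict) (integrable_const _), setIntegral_const,
        smul_eq_mul, measureReal_def, hμS, hμ1]
    have hYSc : ∫ ω in Sᶜ, (Y ω - mstar) ∂μ = (1 - π1) * μm1 - (1 - π1) * mstar := by
      rw [← hScEq] at hμm1
      rw [integral_sub (hYint.restrict) (integrable_const _), setIntegral_const,
        smul_eq_mul, measureReal_def, hμSc, hμm1]
    rw [h1, h2, integral_mul_const, integral_mul_const, hYS, hYSc, hmstar]
    field_simp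
    ring
  -- mean invariance
  have hmean : ∫ ω, τ m ω ∂μ = ∫ ω, τ mstar ω ∂μ := by
    have h1 : ∫ ω, τ m ω ∂μ = ∫ ω, (τ mstar ω + (mstar - m) * g ω) ∂μ :=
      integral_congr_ae (Filter.Eventually.of_forall fun ω => hdec m ω)
    have hc : Integrable (fun ω => (mstar - m) * g ω) μ := hgint.const_mul _
    rw [h1, integral_add (hτint mstar) hc, integral_const_mul, hg0]
    ring
  -- second moment expansion
  have hsq : ∫ ω, (τ m ω) ^ 2 ∂μ
      = ∫ ω, (τ mstar ω) ^ 2 ∂μ + (mstar - m) ^ 2 * (1 / π1 + 1 / (1 - π1)) := by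
    have h1 : ∀ ω, (τ m ω) ^ 2 = (τ mstar ω) ^ 2
        + ((2 * (mstar - m)) * (τ mstar ω * g ω) + (mstar - m) ^ 2 * (g ω) ^ 2) := by
      intro ω
      rw [hdec m ω]
      ring
    have e1 : Integrable (fun ω => (2 * (mstar - m)) * (τ mstar ω * g ω)) μ :=
      hτgint.const_mul _
    have e2 : Integrable (fun ω => (mstar - m) ^ 2 * (g ω) ^ 2) μ :=
      hgsqint.const_mul _
    have e12 : Integrable (fun ω => (2 * (mstar - m)) * (τ mstar ω * g ω)
        + (mstar - m) ^ 2 * (g ω) ^ 2) μ := e1.add e2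
    rw [integral_congr_ae (Filter.Eventually.of_forall h1),
      integral_add (hτsqint mstar) e12, integral_add e1 e2,
      integral_const_mul, integral_const_mul, hcross, hgsq]
    ring
  -- conclude
  rw [hVar m, hVar mstar, hmean, hsq]
  have hc : 0 ≤ (mstar - m) ^ 2 * (1 / π1 + 1 / (1 - π1)) := by positivity
  linarith
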